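/- With G, E = ℤ^ν, τ, and φ : G → GL_ν(ℚ) ⋉ ℚ^ν as above, and N = ker m the kernel of the modular homomorphism, the image φ(N) equals the subgroup H = ⋁_{n∈ℤ} τⁿ(E) of ℚ^ν generated by all τⁿ(E), n ∈ ℤ. -/

import Mathlib

open HNNExtension Multiplicative

/-- The conjugate subgroup `gEg⁻¹`. -/
def conjSubgroup {G : Type*} [Group G] (g : G) (E : Subgroup G) : Subgroup G :=
  E.map (MulAut.conj g).toMonoidHom

/-- The modular map `m(g) = [E : E ∩ gEg⁻¹] / [gEg⁻¹ : E ∩ gEg⁻¹]`. -/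
noncomputable def modularMap {G : Type*} [Group G] (E : Subgroup G) (g : G) : ℚ :=
  ((conjSubgroup g E).relIndex E : ℚ) / (E.relIndex (conjSubgroup g E) : ℚ)

/-- The action of `GL_ν(ℚ)` on `ℚ^ν` (written multiplicatively). -/
def glAct (ν : ℕ) :
    ((Fin ν → ℚ) ≃ₗ[ℚ] (Fin ν → ℚ)) →* MulAut (Multiplicative (Fin ν → ℚ)) :=
  MonoidHom.mk' (fun T => AddEquiv.toMultiplicative T.toAddEquiv) (by intro a b; rfl)

/-- The embedding `ℤ^ν → ℚ^ν`. -/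
def intEmb (ν : ℕ) : Multiplicative (Fin ν → ℤ) →* Multiplicative (Fin ν → ℚ) :=
  MonoidHom.mk' (fun a => Multiplicative.ofAdd fun i => ((a.toAdd i : ℤ) : ℚ))
    (by
      intro a b
      rw [← ofAdd_add]
      funext i
      exact Int.cast_add _ _)

section Aux

variable {X Y : Type*} [Group X] [Group Y]

lemma relindex_map_inj (f : X →* Y) (hf : Function.Injective f) (A B : Subgroup X) :
    (A.map f).relIndex (B.map f) = A.relIndex B := by
  conv_rhs => rw [← Subgroup.comap_map_eq_self_of_injective hf A, Subgroup.relIndex_comap]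

noncomputable def dd (A B : Subgroup X) : ℚ := (B.relIndex A : ℚ) / (A.relIndex B : ℚ)

lemma modularMap_eq_dd (E : Subgroup X) (g : X) :
    modularMap E g = dd E (conjSubgroup g E) := rfl

lemma dd_map (f : X →* Y) (hf : Function.Injective f) (A B : Subgroup X) :
    dd (A.map f) (B.map f) = dd A B := by
  unfold dd
  rw [relindex_map_inj f hf, relindex_map_inj f hf]

lemma dd_swap (A B : Subgroup X) : dd B A = (dd A B)⁻¹ := by
  unfold dd; rw [inv_div]

lemma dd_eq_of_le {A B C : Subgroup X} (hCA : C ≤ A) (hCB : C ≤ B)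
    (hA : C.relIndex A ≠ 0) :
    dd A B = (C.relIndex A : ℚ) / (C.relIndex B : ℚ) := by
  have h1 := Subgroup.relIndex_mul_relIndex C (A ⊓ B) A (le_inf hCA hCB) inf_le_left
  have h2 := Subgroup.relIndex_mul_relIndex C (A ⊓ B) B (le_inf hCA hCB) inf_le_right
  rw [Subgroup.inf_relIndex_left] at h1
  rw [Subgroup.inf_relIndex_right] at h2
  have hk : C.relIndex (A ⊓ B) ≠ 0 := by
    intro h
    rw [h, zero_mul] at h1
    exact hA h1.symm
  have hk' : ((C.relIndex (A ⊓ B) : ℕ) : ℚ) ≠ 0 := Nat.cast_ne_zero.2 hk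
  rw [dd, ← h1, ← h2, Nat.cast_mul, Nat.cast_mul, mul_div_mul_left _ _ hk']

lemma comm_map (f : X →* Y) (hf : Function.Injective f) {A B : Subgroup X}
    (h : Subgroup.Commensurable A B) : Subgroup.Commensurable (A.map f) (B.map f) :=
  ⟨by rw [relindex_map_inj f hf]; exact h.1, by rw [relindex_map_inj f hf]; exact h.2⟩

lemma dd_cocycle {A B C : Subgroup X} (hAB : Subgroup.Commensurable A B) (hBC : Subgroup.Commensurable B C) :
    dd A C = dd A B * dd B C := by
  have hCAB : C.relIndex (A ⊓ B) ≠ 0 := fun h =>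
    hBC.2 (Subgroup.relIndex_eq_zero_of_le_right inf_le_right h)
  have hABC : A.relIndex (B ⊓ C) ≠ 0 := fun h =>
    hAB.1 (Subgroup.relIndex_eq_zero_of_le_right inf_le_left h)
  have hDA : (A ⊓ B ⊓ C).relIndex A ≠ 0 := by
    have h := Subgroup.relIndex_mul_relIndex (A ⊓ B ⊓ C) (A ⊓ B) A inf_le_left inf_le_left
    rw [Subgroup.inf_relIndex_left, Subgroup.inf_relIndex_left] at h
    rw [← h]
    exact Nat.mul_ne_zero hCAB hAB.2
  have hDB : (A ⊓ B ⊓ C).relIndex B ≠ 0 := by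
    have h := Subgroup.relIndex_mul_relIndex (A ⊓ B ⊓ C) (A ⊓ B) B inf_le_left inf_le_right
    rw [Subgroup.inf_relIndex_left, Subgroup.inf_relIndex_right] at h
    rw [← h]
    exact Nat.mul_ne_zero hCAB hAB.1
  have hDC : (A ⊓ B ⊓ C).relIndex C ≠ 0 := by
    have h := Subgroup.relIndex_mul_relIndex (A ⊓ (B ⊓ C)) (B ⊓ C) C inf_le_right inf_le_right
    rw [Subgroup.inf_relIndex_right, Subgroup.inf_relIndex_right] at h
    rw [← inf_assoc] at h
    rw [← h]
    exact Nat.mul_ne_zero hABC hBC.1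
  have hDA' : (A ⊓ B ⊓ C) ≤ A := inf_le_left.trans inf_le_left
  have hDB' : (A ⊓ B ⊓ C) ≤ B := inf_le_left.trans inf_le_right
  have hDC' : (A ⊓ B ⊓ C) ≤ C := inf_le_right
  rw [dd_eq_of_le hDA' hDC' hDA, dd_eq_of_le hDA' hDB' hDA, dd_eq_of_le hDB' hDC' hDB]
  have hb : (((A ⊓ B ⊓ C).relIndex B : ℕ) : ℚ) ≠ 0 := Nat.cast_ne_zero.2 hDB
  field_simp

lemma conjSubgroup_mul (g h : X) (E : Subgroup X) :
    conjSubgroup (g * h) E = conjSubgroup g (conjSubgroup h E) := by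
  unfold conjSubgroup
  rw [Subgroup.map_map]
  congr 1
  ext x
  simp [mul_assoc]

lemma conjSubgroup_one (E : Subgroup X) : conjSubgroup 1 E = E := by
  unfold conjSubgroup
  ext x
  simp

lemma dd_conj (g : X) (A B : Subgroup X) : dd (conjSubgroup g A) (conjSubgroup g B) = dd A B :=
  dd_map _ (fun _ _ hab => (MulAut.conj g).injective hab) A B

lemma comm_conj (g : X) {A B : Subgroup X} (h : Subgroup.Commensurable A B) :
    Subgroup.Commensurable (conjSubgroup g A) (conjSubgroup g B) :=
  comm_map _ (fun _ _ hab => (MulAut.conj g).injective hab) h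

end Aux

/-- With `G` the HNN extension of `E = ℤ^ν` along `τ : E₋ ≃ E₊` (of finite indices
`p = [E : E₋] ≠ q = [E : E₊]`), `m` the modular homomorphism associated to `E`, `N = ker m`,
and `φ : G → GL_ν(ℚ) ⋉ ℚ^ν` the homomorphism sending `E = ℤ^ν` into `ℚ^ν` and `t` to the
extension `T ∈ GL_ν(ℚ)` of `τ`, the image `φ(N)` equals the subgroup
`H = ⋁_{n ∈ ℤ} Tⁿ(E)` of `ℚ^ν` generated by all `Tⁿ(E)`, `n ∈ ℤ`. -/
theorem image_ker_modular_eq (ν : ℕ)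
    (Em Ep : Subgroup (Multiplicative (Fin ν → ℤ)))
    (hEm : Em.index ≠ 0) (hEp : Ep.index ≠ 0) (hpq : Em.index ≠ Ep.index)
    (τ : Em ≃* Ep)
    (T : (Fin ν → ℚ) ≃ₗ[ℚ] (Fin ν → ℚ))
    (hT : ∀ b : Em,
      T (fun i => (((b : Multiplicative (Fin ν → ℤ)).toAdd i : ℤ) : ℚ)) =
        fun i => ((((τ b : Ep) : Multiplicative (Fin ν → ℤ)).toAdd i : ℤ) : ℚ))
    (Φ : HNNExtension (Multiplicative (Fin ν → ℤ)) Em Ep τ →*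
        (Multiplicative (Fin ν → ℚ)) ⋊[glAct ν] ((Fin ν → ℚ) ≃ₗ[ℚ] (Fin ν → ℚ)))
    (hΦof : ∀ a : Multiplicative (Fin ν → ℤ),
      Φ (HNNExtension.of a) = SemidirectProduct.inl (intEmb ν a))
    (hΦt : Φ HNNExtension.t = SemidirectProduct.inr T) :
    Φ '' {g | modularMap (HNNExtension.of (φ := τ)).range g = 1} =
      SemidirectProduct.inl ''
        ((Subgroup.closure
          {v : Multiplicative (Fin ν → ℚ) | ∃ (n : ℤ) (a : Multiplicative (Fin ν → ℤ)),
            v = Multiplicative.ofAdd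
              ((T ^ n : (Fin ν → ℚ) ≃ₗ[ℚ] (Fin ν → ℚ)) (fun i => ((a.toAdd i : ℤ) : ℚ)))} :
          Subgroup (Multiplicative (Fin ν → ℚ))) : Set (Multiplicative (Fin ν → ℚ))) := by
  classical
  set E : Subgroup (HNNExtension (Multiplicative (Fin ν → ℤ)) Em Ep τ) :=
    (HNNExtension.of (φ := τ)).range with hE
  -- conjugation by elements of `E` fixes `E`
  have h_of_conj : ∀ a : Multiplicative (Fin ν → ℤ),
      conjSubgroup (HNNExtension.of (φ := τ) a) E = E := by
    intro a
    have hcomp : (MulAut.conj (HNNExtension.of (φ := τ) a)).toMonoidHom.comp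
        (HNNExtension.of (φ := τ)) = HNNExtension.of (φ := τ) := by
      refine MonoidHom.ext fun b => ?_
      simp only [MonoidHom.comp_apply, MulEquiv.coe_toMonoidHom, MulAut.conj_apply]
      rw [← map_inv, ← map_mul, ← map_mul, mul_comm a b, mul_inv_cancel_right]
    rw [hE, conjSubgroup, MonoidHom.range_eq_map, Subgroup.map_map, hcomp]
  -- the conjugate of `of '' Em` by `t` is `of '' Ep`
  have hconjt : (Subgroup.map (HNNExtension.of (φ := τ)) Em).map
      (MulAut.conj (HNNExtension.t (φ := τ))).toMonoidHom
      = Subgroup.map (HNNExtension.of (φ := τ)) Ep := by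
    apply le_antisymm
    · rintro x hx
      simp only [Subgroup.mem_map] at hx ⊢
      obtain ⟨y, ⟨a, ha, rfl⟩, rfl⟩ := hx
      refine ⟨((τ ⟨a, ha⟩ : Ep) : Multiplicative (Fin ν → ℤ)), (τ ⟨a, ha⟩).2, ?_⟩
      simp only [MulEquiv.coe_toMonoidHom, MulAut.conj_apply]
      exact HNNExtension.equiv_eq_conj (φ := τ) ⟨a, ha⟩
    · rintro x hx
      simp only [Subgroup.mem_map] at hx ⊢
      obtain ⟨b, hb, rfl⟩ := hx
      refine ⟨HNNExtension.of ((τ.symm ⟨b, hb⟩ : Em) : Multiplicative (Fin ν → ℤ)),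
        ⟨((τ.symm ⟨b, hb⟩ : Em) : Multiplicative (Fin ν → ℤ)), (τ.symm ⟨b, hb⟩).2, rfl⟩, ?_⟩
      simp only [MulEquiv.coe_toMonoidHom, MulAut.conj_apply]
      rw [← HNNExtension.equiv_eq_conj (φ := τ) (τ.symm ⟨b, hb⟩), MulEquiv.apply_symm_apply]
  have hPE : Subgroup.map (HNNExtension.of (φ := τ)) Ep ≤ E := by
    rw [hE]; exact Subgroup.map_le_range _ _
  have hCdef : conjSubgroup (HNNExtension.t (φ := τ)) E
      = E.map (MulAut.conj (HNNExtension.t (φ := τ))).toMonoidHom := rfl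
  have hPC : Subgroup.map (HNNExtension.of (φ := τ)) Ep
      ≤ conjSubgroup (HNNExtension.t (φ := τ)) E := by
    rw [hCdef, ← hconjt]
    exact Subgroup.map_mono (by rw [hE]; exact Subgroup.map_le_range _ _)
  have hrelPE : (Subgroup.map (HNNExtension.of (φ := τ)) Ep).relIndex E = Ep.index := by
    rw [hE, MonoidHom.range_eq_map, relindex_map_inj _ (HNNExtension.of_injective τ),
      Subgroup.relIndex_top_right]
  have hrelPC : (Subgroup.map (HNNExtension.of (φ := τ)) Ep).relIndex
      (conjSubgroup (HNNExtension.t (φ := τ)) E) = Em.index := by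
    rw [hCdef, ← hconjt, hE, MonoidHom.range_eq_map,
      relindex_map_inj _ (fun _ _ hab => (MulAut.conj (HNNExtension.t (φ := τ))).injective hab),
      relindex_map_inj _ (HNNExtension.of_injective τ), Subgroup.relIndex_top_right]
  -- commensurability of all conjugates
  have CommE : ∀ g, Subgroup.Commensurable E (conjSubgroup g E) := by
    intro g
    induction g using HNNExtension.induction_on with
    | of a => rw [h_of_conj a]
    | t =>
      constructor
      · intro h0
        exact hEm (by rw [← hrelPC]; exact Subgroup.relIndex_eq_zero_of_le_left hPE h0)
      · intro h0
        exact hEp (by rw [← hrelPE]; exact Subgroup.relIndex_eq_zero_of_le_left hPC h0)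
    | mul x y ihx ihy =>
      rw [conjSubgroup_mul]
      exact ihx.trans (comm_conj x ihy)
    | inv x ihx =>
      have h := comm_conj x⁻¹ ihx
      rw [← conjSubgroup_mul, inv_mul_cancel, conjSubgroup_one] at h
      exact h.symm
  -- the degree homomorphism
  set σ : HNNExtension (Multiplicative (Fin ν → ℤ)) Em Ep τ →* Multiplicative ℤ :=
    HNNExtension.lift 1 (Multiplicative.ofAdd (1 : ℤ)) (fun a => by simp) with hσdef
  have hσof : ∀ a : Multiplicative (Fin ν → ℤ), σ (HNNExtension.of a) = 1 := by
    intro a; rw [hσdef]; simp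
  have hσt : σ (HNNExtension.t) = Multiplicative.ofAdd (1 : ℤ) := by
    rw [hσdef]; simp
  set r : ℚ := (Ep.index : ℚ) / (Em.index : ℚ) with hr
  have hrpos : 0 < r := div_pos
    (Nat.cast_pos.2 (Nat.pos_of_ne_zero hEp)) (Nat.cast_pos.2 (Nat.pos_of_ne_zero hEm))
  have hr0 : r ≠ 0 := ne_of_gt hrpos
  have hr1 : r ≠ 1 := by
    rw [hr]
    intro h
    rw [div_eq_one_iff_eq (Nat.cast_ne_zero.2 hEm)] at h
    exact hpq (Nat.cast_injective h).symm
  -- the modular map in terms of the degree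
  have hm : ∀ g, modularMap E g = r ^ (toAdd (σ g)) := by
    intro g
    induction g using HNNExtension.induction_on with
    | of a =>
      rw [modularMap_eq_dd, h_of_conj a, hσof a, toAdd_one, zpow_zero]
      simp [dd, Subgroup.relIndex_self]
    | t =>
      rw [modularMap_eq_dd, hσt, toAdd_ofAdd, zpow_one,
        dd_eq_of_le hPE hPC (by rw [hrelPE]; exact hEp), hrelPE, hrelPC]
    | mul x y ihx ihy =>
      rw [modularMap_eq_dd, conjSubgroup_mul,
        dd_cocycle (CommE x) (comm_conj x (CommE y)), dd_conj,
        ← modularMap_eq_dd, ← modularMap_eq_dd, ihx, ihy, map_mul, toAdd_mul,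
        zpow_add₀ hr0]
    | inv x ihx =>
      have h1 : dd E (conjSubgroup x⁻¹ E)
          = dd (conjSubgroup x E) (conjSubgroup x (conjSubgroup x⁻¹ E)) :=
        (dd_conj x _ _).symm
      rw [modularMap_eq_dd, h1, ← conjSubgroup_mul, mul_inv_cancel, conjSubgroup_one,
        dd_swap, ← modularMap_eq_dd, ihx, map_inv, toAdd_inv, zpow_neg]
  -- the kernel of σ is generated by the conjugates of E
  set Sset : Set (HNNExtension (Multiplicative (Fin ν → ℤ)) Em Ep τ) :=
    {x | ∃ (n : ℤ) (a : Multiplicative (Fin ν → ℤ)),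
      x = HNNExtension.t ^ n * HNNExtension.of a * (HNNExtension.t ^ n)⁻¹} with hSset
  have hconjK : ∀ (m : ℤ) k, k ∈ Subgroup.closure Sset →
      HNNExtension.t ^ m * k * (HNNExtension.t ^ m)⁻¹ ∈ Subgroup.closure Sset := by
    intro m k hk
    induction hk using Subgroup.closure_induction with
    | mem x hx =>
      obtain ⟨n, a, rfl⟩ := hx
      have hx' : (HNNExtension.t (φ := τ)) ^ m *
            (HNNExtension.t ^ n * HNNExtension.of a * (HNNExtension.t ^ n)⁻¹) *
            (HNNExtension.t ^ m)⁻¹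
          = HNNExtension.t ^ (m + n) * HNNExtension.of a * (HNNExtension.t ^ (m + n))⁻¹ := by
        rw [zpow_add]; group
      rw [hx']
      exact Subgroup.subset_closure ⟨m + n, a, rfl⟩
    | one =>
      rw [mul_one, mul_inv_cancel]
      exact one_mem _
    | mul x y hx hy ihx ihy =>
      have h : (HNNExtension.t (φ := τ)) ^ m * (x * y) * (HNNExtension.t ^ m)⁻¹
          = (HNNExtension.t ^ m * x * (HNNExtension.t ^ m)⁻¹) *
            (HNNExtension.t ^ m * y * (HNNExtension.t ^ m)⁻¹) := by group
      rw [h]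
      exact mul_mem ihx ihy
    | inv x hx ihx =>
      have h : (HNNExtension.t (φ := τ)) ^ m * x⁻¹ * (HNNExtension.t ^ m)⁻¹
          = (HNNExtension.t ^ m * x * (HNNExtension.t ^ m)⁻¹)⁻¹ := by group
      rw [h]
      exact inv_mem ihx
  have hKle : Subgroup.closure Sset ≤ σ.ker := by
    rw [Subgroup.closure_le]
    rintro x ⟨n, a, rfl⟩
    simp only [SetLike.mem_coe, MonoidHom.mem_ker]
    rw [map_mul, map_mul, map_inv, hσof, mul_one, mul_inv_cancel]
  have hkerle : σ.ker ≤ Subgroup.closure Sset := by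
    have key : ∀ g, ∃ k ∈ Subgroup.closure Sset, g = k * HNNExtension.t ^ (toAdd (σ g)) := by
      intro g
      induction g using HNNExtension.induction_on with
      | of a =>
        exact ⟨HNNExtension.of a, Subgroup.subset_closure ⟨0, a, by simp⟩,
          by rw [hσof, toAdd_one, zpow_zero, mul_one]⟩
      | t =>
        exact ⟨1, one_mem _, by rw [hσt, toAdd_ofAdd, zpow_one, one_mul]⟩
      | mul x y ihx ihy =>
        obtain ⟨k, hk, hx⟩ := ihx
        obtain ⟨l, hl, hy⟩ := ihy
        refine ⟨k * (HNNExtension.t ^ (toAdd (σ x)) * l * (HNNExtension.t ^ (toAdd (σ x)))⁻¹),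
          mul_mem hk (hconjK _ _ hl), ?_⟩
        have h : x * y = (k * HNNExtension.t ^ (toAdd (σ x))) *
            (l * HNNExtension.t ^ (toAdd (σ y))) := by rw [← hx, ← hy]
        rw [map_mul, toAdd_mul, zpow_add, h]
        group
      | inv x ihx =>
        obtain ⟨k, hk, hx⟩ := ihx
        refine ⟨HNNExtension.t ^ (-(toAdd (σ x))) * k⁻¹ * (HNNExtension.t ^ (-(toAdd (σ x))))⁻¹,
          hconjK _ _ (inv_mem hk), ?_⟩
        have h : x⁻¹ = (k * HNNExtension.t ^ (toAdd (σ x)))⁻¹ := by rw [← hx]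
        rw [map_inv, toAdd_inv, h]
        group
    intro g hg
    rw [MonoidHom.mem_ker] at hg
    obtain ⟨k, hk, hgk⟩ := key g
    rw [hg, toAdd_one, zpow_zero, mul_one] at hgk
    rw [hgk]
    exact hk
  -- the set `N` equals the closure
  have hiff : ∀ g, modularMap E g = 1 ↔ g ∈ Subgroup.closure Sset := by
    intro g
    rw [hm g]
    constructor
    · intro h
      have h0 : toAdd (σ g) = 0 := zpow_right_injective₀ hrpos hr1
        (show r ^ (toAdd (σ g)) = r ^ (0 : ℤ) by rw [zpow_zero]; exact h)
      refine hkerle ?_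
      rw [MonoidHom.mem_ker, ← ofAdd_toAdd (σ g), h0, ofAdd_zero]
    · intro h
      have h1 := hKle h
      rw [MonoidHom.mem_ker] at h1
      rw [h1, toAdd_one, zpow_zero]
  have hset : {g | modularMap E g = 1}
      = (Subgroup.closure Sset :
          Set (HNNExtension (Multiplicative (Fin ν → ℤ)) Em Ep τ)) :=
    Set.ext fun g => hiff g
  -- compute the image of the generators under Φ
  have hΦgen : ∀ (n : ℤ) (a : Multiplicative (Fin ν → ℤ)),
      Φ (HNNExtension.t ^ n * HNNExtension.of a * (HNNExtension.t ^ n)⁻¹) =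
        SemidirectProduct.inl (Multiplicative.ofAdd
          ((T ^ n : (Fin ν → ℚ) ≃ₗ[ℚ] (Fin ν → ℚ)) (fun i => ((a.toAdd i : ℤ) : ℚ)))) := by
    intro n a
    have h1 : Φ (HNNExtension.t ^ n) = SemidirectProduct.inr (T ^ n) := by
      rw [map_zpow, hΦt, ← map_zpow]
    rw [map_mul, map_mul, map_inv, h1, hΦof, ← map_inv,
      ← SemidirectProduct.inl_aut (T ^ n) (intEmb ν a)]
    rfl
  rw [hset, ← Subgroup.coe_map, ← Subgroup.coe_map, MonoidHom.map_closure, MonoidHom.map_closure]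
  have himg : (⇑Φ) '' Sset = (⇑(SemidirectProduct.inl
      (φ := glAct ν))) '' {v : Multiplicative (Fin ν → ℚ) |
        ∃ (n : ℤ) (a : Multiplicative (Fin ν → ℤ)),
        v = Multiplicative.ofAdd
          ((T ^ n : (Fin ν → ℚ) ≃ₗ[ℚ] (Fin ν → ℚ)) (fun i => ((a.toAdd i : ℤ) : ℚ)))} := by
    ext x
    simp only [Set.mem_image, hSset, Set.mem_setOf_eq]
    constructor
    · rintro ⟨g, ⟨n, a, rfl⟩, rfl⟩
      exact ⟨_, ⟨n, a, rfl⟩, (hΦgen n a).symm⟩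
    · rintro ⟨v, ⟨n, a, rfl⟩, rfl⟩
      exact ⟨_, ⟨n, a, rfl⟩, hΦgen n a⟩
  rw [himg]
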